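/- Let N be a free ℤ-module of rank 2 with a nondegenerate even symmetric bilinear form B whose Gram matrix with respect to a ℤ-basis has negative determinant, and let H ∈ N satisfy B(H,H) = 2rs, where r,s ≥ 1 are integers, and suppose x ↦ B(H,x) is surjective from N onto ℤ. Then there exist δ ∈ N, a positive integer d, and an integer μ such that: the determinant of the Gram matrix equals −d; the orthogonal complement {x ∈ N : B(H,x) = 0} equals ℤ·δ; B(δ,δ) = −2rsd; gcd(μ, 2rs) = 1; μ² ≡ d (mod 4rs); there exists v ∈ N with 2rs·v = μH + δ and N = ℤH + ℤδ + ℤv; and every z ∈ N satisfies 2rs·z = xH + yδ for unique integers x, y with x ≡ μy (mod 2rs), in which case B(z,z) = (x² − dy²)/(2rs). -/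

import Mathlib

/-- Proposition 3.1.1 of the paper.  Let `N` be a rank-2 free ℤ-module with
a nondegenerate even symmetric bilinear form `B` whose Gram matrix (w.r.t. a ℤ-basis `e`) has
negative determinant (hyperbolicity), and let `H ∈ N` satisfy `B H H = 2rs` with `r, s ≥ 1`;
suppose `x ↦ B H x` is surjective onto ℤ (`γ(H) = 1`).  Then there are `δ ∈ N`, `d ∈ ℕ`,
`d > 0`, and `μ ∈ ℤ` with: `det (Gram) = -d`; `H^⊥ = ℤ·δ`; `B δ δ = -2rsd`;
`gcd(μ, 2rs) = 1`; `μ² ≡ d (mod 4rs)`; there is `v ∈ N` with `2rs·v = μH + δ` and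
`N = ℤH + ℤδ + ℤv`; and every `z ∈ N` satisfies `2rs·z = xH + yδ` for unique integers
`x, y`, which moreover satisfy `x ≡ μy (mod 2rs)` and `2rs·B z z = x² − dy²`. -/
theorem picard_lattice_rank_two_structure
    {N : Type*} [AddCommGroup N] [Module ℤ N] [Module.Free ℤ N]
    (e : Module.Basis (Fin 2) ℤ N)
    (B : LinearMap.BilinForm ℤ N) (hsymm : B.IsSymm) (hnd : B.Nondegenerate)
    (heven : ∀ x : N, 2 ∣ B x x)
    (hdet : (Matrix.of fun i j => B (e i) (e j)).det < 0)
    (r s : ℤ) (hr : 1 ≤ r) (hs : 1 ≤ s)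
    (H : N) (hH : B H H = 2 * r * s)
    (hsurj : Function.Surjective (B H)) :
    ∃ (δ : N) (d μ : ℤ), 0 < d ∧
      (Matrix.of fun i j => B (e i) (e j)).det = -d ∧
      LinearMap.ker (B H) = Submodule.span ℤ {δ} ∧
      B δ δ = -(2 * r * s * d) ∧
      Int.gcd μ (2 * r * s) = 1 ∧
      (4 * r * s) ∣ (μ ^ 2 - d) ∧
      (∃ v : N, (2 * r * s) • v = μ • H + δ ∧
        Submodule.span ℤ ({H, δ, v} : Set N) = ⊤) ∧
      ∀ z : N, ∃! xy : ℤ × ℤ,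
        (2 * r * s) • z = xy.1 • H + xy.2 • δ ∧
        (2 * r * s) ∣ (xy.1 - μ * xy.2) ∧
        2 * r * s * B z z = xy.1 ^ 2 - d * xy.2 ^ 2 := by
  -- normalize all ℤ-smuls in the goal to the `Module ℤ N` smul
  simp only [← Int.cast_smul_eq_zsmul ℤ, Int.cast_id]
  set n : ℤ := 2 * r * s with hn_def
  have hn_pos : 0 < n := by rw [hn_def]; nlinarith
  have hn0 : n ≠ 0 := ne_of_gt hn_pos
  obtain ⟨f, hf⟩ := hsurj 1
  set p : ℤ := B H (e 0) with hp_def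
  set q : ℤ := B H (e 1) with hq_def
  -- basic expansion in the basis `e`
  have hexp : ∀ x : N, x = e.repr x 0 • e 0 + e.repr x 1 • e 1 := by
    simp only [← Int.cast_smul_eq_zsmul ℤ, Int.cast_id]
    intro x
    have h := e.sum_repr x
    rw [Fin.sum_univ_two] at h
    exact h.symm
  simp only [← Int.cast_smul_eq_zsmul ℤ, Int.cast_id] at hexp
  have hBHx : ∀ x : N, B H x = e.repr x 0 * p + e.repr x 1 * q := by
    intro x
    conv_lhs => rw [hexp x]
    simp only [map_add, map_smul, smul_eq_mul]
    rfl
  set f₀ : ℤ := e.repr f 0 with hf₀_def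
  set f₁ : ℤ := e.repr f 1 with hf₁_def
  have hpq : f₀ * p + f₁ * q = 1 := by
    have h := hBHx f
    rw [hf] at h
    rw [hf₀_def, hf₁_def]
    exact h.symm
  obtain ⟨δ, hδ_def⟩ : ∃ δ : N, δ = q • e 0 - p • e 1 := ⟨_, rfl⟩
  simp only [← Int.cast_smul_eq_zsmul ℤ, Int.cast_id] at hδ_def
  have hδ0 : e.repr δ 0 = q := by rw [hδ_def]; simp
  have hδ1 : e.repr δ 1 = -p := by rw [hδ_def]; simp
  have hBHδ : B H δ = 0 := by
    rw [hδ_def]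
    simp only [map_sub, map_smul, smul_eq_mul]
    rw [← hp_def, ← hq_def]
    ring
  have hδH : B δ H = 0 := by
    have h := (hsymm.eq H δ).symm
    rw [h]
    exact hBHδ
  have hbs : B δ f = B f δ := by
    have h := (hsymm.eq f δ).symm
    simpa using h
  -- the kernel of B H is generated by δ
  have hmem : ∀ x : N, B H x = 0 → ∃ m : ℤ, x = m • δ := by
    simp only [← Int.cast_smul_eq_zsmul ℤ, Int.cast_id]
    intro x hx
    rw [hBHx x] at hx
    refine ⟨f₁ * e.repr x 0 - f₀ * e.repr x 1, ?_⟩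
    refine e.ext_elem_iff.mpr (Fin.forall_fin_two.mpr ⟨?_, ?_⟩)
    · simp only [map_smul, Finsupp.smul_apply, smul_eq_mul, hδ0]
      linear_combination (-(e.repr x 0)) * hpq + f₀ * hx
    · simp only [map_smul, Finsupp.smul_apply, smul_eq_mul, hδ1]
      linear_combination (-(e.repr x 1)) * hpq + f₁ * hx
  simp only [← Int.cast_smul_eq_zsmul ℤ, Int.cast_id] at hmem
  -- decomposition of any element
  have hdecomp : ∀ x : N, ∃ m : ℤ, x = B H x • f + m • δ := by
    simp only [← Int.cast_smul_eq_zsmul ℤ, Int.cast_id]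
    intro x
    have h0 : B H (x - B H x • f) = 0 := by
      simp only [← Int.cast_smul_eq_zsmul ℤ, Int.cast_id]
      simp only [map_sub, map_smul, smul_eq_mul, hf, mul_one, sub_self]
    obtain ⟨m, hm⟩ := hmem _ h0
    simp only [← Int.cast_smul_eq_zsmul ℤ, Int.cast_id] at hm
    refine ⟨m, ?_⟩
    rw [← hm]
    abel
  simp only [← Int.cast_smul_eq_zsmul ℤ, Int.cast_id] at hdecomp
  obtain ⟨t, ht⟩ := hdecomp H
  rw [hH] at ht
  -- basic bilinear identities
  have eq1 : n * B f f + t * B f δ = 1 := by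
    have h := hf
    rw [ht] at h
    simp only [map_add, map_smul, LinearMap.add_apply, LinearMap.smul_apply,
      smul_eq_mul, hbs] at h
    linear_combination h
  have eq2 : n * B f δ + t * B δ δ = 0 := by
    have h := hBHδ
    rw [ht] at h
    simp only [map_add, map_smul, LinearMap.add_apply, LinearMap.smul_apply,
      smul_eq_mul, hbs] at h
    linear_combination h
  -- coordinates of e 0, e 1 in terms of f, δ
  obtain ⟨m₀, hm₀⟩ := hdecomp (e 0)
  obtain ⟨m₁, hm₁⟩ := hdecomp (e 1)
  rw [← hp_def] at hm₀
  rw [← hq_def] at hm₁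
  have hE1 : p * f₀ + m₀ * q = 1 := by
    have h := congrArg (fun y => e.repr y 0) hm₀
    simp only [map_add, map_smul, Finsupp.add_apply, Finsupp.smul_apply, smul_eq_mul,
      Module.Basis.repr_self, Finsupp.single_eq_same, hδ0, ← hf₀_def] at h
    linear_combination -h
  have hE2 : p * f₁ - m₀ * p = 0 := by
    have h := congrArg (fun y => e.repr y 1) hm₀
    simp only [map_add, map_smul, Finsupp.add_apply, Finsupp.smul_apply, smul_eq_mul,
      Module.Basis.repr_self, hδ1, ← hf₁_def, Finsupp.single_apply] at h
    simp at h
    linear_combination -h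
  have hE3 : q * f₀ + m₁ * q = 0 := by
    have h := congrArg (fun y => e.repr y 0) hm₁
    simp only [map_add, map_smul, Finsupp.add_apply, Finsupp.smul_apply, smul_eq_mul,
      Module.Basis.repr_self, hδ0, ← hf₀_def, Finsupp.single_apply] at h
    simp at h
    linear_combination -h
  have hE4 : q * f₁ - m₁ * p = 1 := by
    have h := congrArg (fun y => e.repr y 1) hm₁
    simp only [map_add, map_smul, Finsupp.add_apply, Finsupp.smul_apply, smul_eq_mul,
      Module.Basis.repr_self, Finsupp.single_eq_same, hδ1, ← hf₁_def] at h
    linear_combination -h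
  have hε : p * m₁ - q * m₀ = -1 := by
    have h5 : (p * m₁ - q * m₀) * (-(f₀ * p) - f₁ * q) = 1 := by
      linear_combination (q * f₁ - m₁ * p) * hE1 + hE4 - (q * f₀ + m₁ * q) * hE2
    linear_combination -h5 - (p * m₁ - q * m₀) * hpq
  -- Gram matrix entries and determinant
  have hB00 : B (e 0) (e 0) =
      p * p * B f f + 2 * (p * m₀) * B f δ + m₀ * m₀ * B δ δ := by
    conv_lhs => rw [hm₀]
    simp only [map_add, map_smul, LinearMap.add_apply, LinearMap.smul_apply,
      smul_eq_mul, hbs]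
    ring
  have hB01 : B (e 0) (e 1) =
      p * q * B f f + (p * m₁ + q * m₀) * B f δ + m₀ * m₁ * B δ δ := by
    conv_lhs => rw [hm₀, hm₁]
    simp only [map_add, map_smul, LinearMap.add_apply, LinearMap.smul_apply,
      smul_eq_mul, hbs]
    ring
  have hB10 : B (e 1) (e 0) =
      p * q * B f f + (p * m₁ + q * m₀) * B f δ + m₀ * m₁ * B δ δ := by
    conv_lhs => rw [hm₀, hm₁]
    simp only [map_add, map_smul, LinearMap.add_apply, LinearMap.smul_apply,
      smul_eq_mul, hbs]
    ring
  have hB11 : B (e 1) (e 1) =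
      q * q * B f f + 2 * (q * m₁) * B f δ + m₁ * m₁ * B δ δ := by
    conv_lhs => rw [hm₁]
    simp only [map_add, map_smul, LinearMap.add_apply, LinearMap.smul_apply,
      smul_eq_mul, hbs]
    ring
  have hDet : (Matrix.of fun i j => B (e i) (e j)).det
      = B f f * B δ δ - B f δ * B f δ := by
    rw [Matrix.det_fin_two]
    simp only [Matrix.of_apply]
    rw [hB00, hB01, hB10, hB11]
    linear_combination ((p * m₁ - q * m₀ - 1) * (B f f * B δ δ - B f δ * B f δ)) * hε
  set d : ℤ := B f δ * B f δ - B f f * B δ δ with hd_def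
  have hd_pos : 0 < d := by
    rw [hd_def]
    have h := hdet
    rw [hDet] at h
    linarith
  have hc : B δ δ = -(n * d) := by
    linear_combination (-(B δ δ)) * eq1 + (B f δ) * eq2 + n * hd_def
  -- Bezout data for μ
  have hp2 : p = n * B f (e 0) + t * B δ (e 0) := by
    rw [hp_def, ht]
    simp only [map_add, map_smul, LinearMap.add_apply, LinearMap.smul_apply, smul_eq_mul]
  have hq2 : q = n * B f (e 1) + t * B δ (e 1) := by
    rw [hq_def, ht]
    simp only [map_add, map_smul, LinearMap.add_apply, LinearMap.smul_apply, smul_eq_mul]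
  set k : ℤ := f₀ * B f (e 0) + f₁ * B f (e 1) with hk_def
  set μ : ℤ := -(f₀ * B δ (e 0) + f₁ * B δ (e 1)) with hμ_def
  have hkμ : k * n - μ * t = 1 := by
    rw [hk_def, hμ_def]
    linear_combination (-f₀) * hp2 + (-f₁) * hq2 + hpq
  obtain ⟨v, hv_def⟩ : ∃ v : N, v = μ • f + k • δ := ⟨_, rfl⟩
  simp only [← Int.cast_smul_eq_zsmul ℤ, Int.cast_id] at hv_def
  have hv : n • v = μ • H + δ := by
    simp only [← Int.cast_smul_eq_zsmul ℤ, Int.cast_id]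
    rw [hv_def, ht]
    have h1 : n * k = μ * t + 1 := by linear_combination hkμ
    letI : MulAction ℤ N := Module.toDistribMulAction.toMulAction
    rw [smul_add, smul_smul, smul_smul, smul_add, smul_smul, smul_smul, h1, add_smul,
      one_smul, mul_comm n μ]
    abel
  simp only [← Int.cast_smul_eq_zsmul ℤ, Int.cast_id] at hv
  -- helper : n • (α • f + m • δ) = α • H + (n m - t α) • δ
  have hkey : ∀ (α m : ℤ), n • (α • f + m • δ) = α • H + (n * m - t * α) • δ := by
    simp only [← Int.cast_smul_eq_zsmul ℤ, Int.cast_id]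
    intro α m
    letI : MulAction ℤ N := Module.toDistribMulAction.toMulAction
    rw [ht, smul_add, smul_smul, smul_smul, smul_add, smul_smul, smul_smul, sub_smul,
      mul_comm n α, mul_comm t α]
    abel
  simp only [← Int.cast_smul_eq_zsmul ℤ, Int.cast_id] at hkey
  refine ⟨δ, d, μ, hd_pos, ?_, ?_, hc, ?_, ?_, ⟨v, hv, ?_⟩, ?_⟩
  · -- determinant
    rw [hDet, hd_def]; ring
  · -- kernel equals span of δ
    apply le_antisymm
    · intro x hx
      obtain ⟨m, hm⟩ := hmem x (LinearMap.mem_ker.mp hx)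
      exact Submodule.mem_span_singleton.mpr ⟨m, hm.symm⟩
    · rw [Submodule.span_le]
      intro x hx
      simp only [Set.mem_singleton_iff] at hx
      subst hx
      exact LinearMap.mem_ker.mpr hBHδ
  · -- gcd
    exact Int.isCoprime_iff_gcd_eq_one.mp ⟨-t, k, by linear_combination hkμ⟩
  · -- 4rs divides μ² - d
    obtain ⟨w, hw⟩ := heven v
    have h := congrArg (fun y => B y y) hv
    simp only [map_add, map_smul, LinearMap.add_apply, LinearMap.smul_apply,
      smul_eq_mul, hBHδ, hδH, hH, mul_zero, add_zero, zero_add] at h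
    have hBvv : n * B v v = μ ^ 2 - d := by
      refine mul_left_cancel₀ hn0 ?_
      linear_combination h + hc
    exact ⟨w, by linear_combination -hBvv + n * hw + (2 * w) * hn_def⟩
  · -- span
    have hfv : f = k • H - t • v := by
      simp only [← Int.cast_smul_eq_zsmul ℤ, Int.cast_id]
      have h1 : f = (k * n - μ * t) • f := by
        simp only [← Int.cast_smul_eq_zsmul ℤ, Int.cast_id]
        letI : MulAction ℤ N := Module.toDistribMulAction.toMulAction
        rw [hkμ, one_smul]
      conv_lhs => rw [h1]
      simp only [← Int.cast_smul_eq_zsmul ℤ, Int.cast_id]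
      rw [ht, hv_def]
      module
    simp only [← Int.cast_smul_eq_zsmul ℤ, Int.cast_id] at hfv
    rw [eq_top_iff]
    rintro x -
    have hHmem : H ∈ Submodule.span ℤ ({H, δ, v} : Set N) :=
      Submodule.subset_span (by simp)
    have hδmem : δ ∈ Submodule.span ℤ ({H, δ, v} : Set N) :=
      Submodule.subset_span (by simp)
    have hvmem : v ∈ Submodule.span ℤ ({H, δ, v} : Set N) :=
      Submodule.subset_span (by simp)
    have hfmem : f ∈ Submodule.span ℤ ({H, δ, v} : Set N) := by
      rw [hfv]
      exact sub_mem (Submodule.smul_mem _ _ hHmem) (Submodule.smul_mem _ _ hvmem)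
    obtain ⟨m, hm⟩ := hdecomp x
    rw [hm]
    exact add_mem (Submodule.smul_mem _ _ hfmem) (Submodule.smul_mem _ _ hδmem)
  · -- uniqueness of coordinates
    intro z
    obtain ⟨m, hm⟩ := hdecomp z
    set x : ℤ := B H z with hx_def
    have hnz : n • z = x • H + (n * m - t * x) • δ := by
      simp only [← Int.cast_smul_eq_zsmul ℤ, Int.cast_id]
      conv_lhs => rw [hm]
      exact hkey x m
    simp only [← Int.cast_smul_eq_zsmul ℤ, Int.cast_id] at hnz
    refine ⟨(x, n * m - t * x), ⟨hnz, ⟨k * x - μ * m, by linear_combination (-x) * hkμ⟩, ?_⟩, ?_⟩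
    · -- the norm formula
      have h := congrArg (fun y => B y y) hnz
      simp only [map_add, map_smul, LinearMap.add_apply, LinearMap.smul_apply,
        smul_eq_mul, hBHδ, hδH, hH, mul_zero, add_zero, zero_add] at h
      refine mul_left_cancel₀ hn0 ?_
      linear_combination h + ((n * m - t * x) ^ 2) * hc
    · -- uniqueness
      rintro ⟨x', y'⟩ ⟨h1, -, -⟩
      dsimp only at h1
      have heq := h1.symm.trans hnz
      have hBH := congrArg (B H) heq
      simp only [map_add, map_smul, smul_eq_mul, hBHδ, hH, mul_zero, add_zero] at hBH
      have hx' : x' = x := mul_right_cancel₀ hn0 hBH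
      rw [hx'] at heq
      have hyy := add_left_cancel heq
      have h0 := congrArg (fun w => e.repr w 0) hyy
      have h1' := congrArg (fun w => e.repr w 1) hyy
      simp only [map_smul, Finsupp.smul_apply, smul_eq_mul, hδ0, hδ1] at h0 h1'
      have hy' : y' = n * m - t * x := by
        linear_combination (n * m - t * x - y') * hpq + f₁ * h0 - f₀ * h1'
      exact Prod.ext hx' hy'
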